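/- Let B be a C*-algebra and C₁ ⊆ C₂ ⊆ B sub-C*-algebras such that C₁ is regular in C₂ and regular in B. Then C₂ is regular in B. Here a sub-C*-algebra C of a C*-algebra D is regular if for all closed two-sided ideals I, J of D: (1) I ∩ C = J ∩ C implies I = J, and (2) (I + J) ∩ C = (I ∩ C) + (J ∩ C). -/

import Mathlib

open Pointwise

/-- A subset `C` of a (topological) ring `D` is a *regular* subalgebra if for all closed
two-sided ideals `I, J` of `D`: (1) `I ∩ C = J ∩ C` implies `I = J`, and
(2) `(I + J) ∩ C = (I ∩ C) + (J ∩ C)`. -/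
def IsRegularIn {D : Type*} [NonUnitalNonAssocRing D] [TopologicalSpace D] (C : Set D) : Prop :=
  (∀ I J : TwoSidedIdeal D, IsClosed (I : Set D) → IsClosed (J : Set D) →
      (I : Set D) ∩ C = (J : Set D) ∩ C → I = J) ∧
  (∀ I J : TwoSidedIdeal D, IsClosed (I : Set D) → IsClosed (J : Set D) →
      ((I : Set D) + (J : Set D)) ∩ C = ((I : Set D) ∩ C) + ((J : Set D) ∩ C))


section Auxiliary

variable {A : Type*} [NonUnitalCStarAlgebra A]

/-- `cfcₙ f a` lies in the closure of the non-unital star subalgebra generated by `a`. -/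
lemma cfcn_mem_closure_adjoin {a : A} (ha : IsSelfAdjoint a) (f : ℝ → ℝ)
    (hf : ContinuousOn f (quasispectrum ℝ a)) (hf0 : f 0 = 0) :
    cfcₙ f a ∈ closure (NonUnitalStarAlgebra.adjoin ℝ {a} : Set A) := by
  rw [cfcₙ_apply f a hf hf0 ha]
  set g : ContinuousMapZero (quasispectrum ℝ a) ℝ :=
    { toFun := (quasispectrum ℝ a).restrict f, continuous_toFun := hf.restrict, map_zero' := hf0 }
  have h0 : ((0 : quasispectrum ℝ a) : ℝ) = 0 := rfl
  haveI : Fact (0 ∈ quasispectrum ℝ a) := ⟨quasispectrum.zero_mem ℝ a⟩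
  have hdense := ContinuousMapZero.adjoin_id_dense (quasispectrum ℝ a)
  have hg : g ∈ closure (NonUnitalStarAlgebra.adjoin ℝ {ContinuousMapZero.id (quasispectrum ℝ a)} :
      Set (ContinuousMapZero (quasispectrum ℝ a) ℝ)) := hdense.closure_eq ▸ Set.mem_univ g
  have hcont := (cfcₙHom_isClosedEmbedding (R := ℝ) ha).continuous
  have hmem := image_closure_subset_closure_image (s :=
    (NonUnitalStarAlgebra.adjoin ℝ {ContinuousMapZero.id (quasispectrum ℝ a)} :
      Set (ContinuousMapZero (quasispectrum ℝ a) ℝ))) hcont ⟨g, hg, rfl⟩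
  refine closure_mono ?_ hmem
  rintro - ⟨x, hx, rfl⟩
  have : NonUnitalStarAlgebra.adjoin ℝ {ContinuousMapZero.id (quasispectrum ℝ a)} ≤
      NonUnitalStarSubalgebra.comap (cfcₙHom ha) (NonUnitalStarAlgebra.adjoin ℝ {a}) := by
    apply NonUnitalStarAlgebra.adjoin_le
    intro y hy
    simp only [Set.mem_singleton_iff] at hy
    subst hy
    rw [SetLike.mem_coe, NonUnitalStarSubalgebra.mem_comap]
    have hid : cfcₙHom ha (ContinuousMapZero.id (quasispectrum ℝ a)) = a := cfcₙHom_id ha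
    rw [hid]
    exact NonUnitalStarAlgebra.self_mem_adjoin_singleton ℝ a
  exact this hx


lemma quasispectrum_star_mul_self_nonneg' (z : A) :
    ∀ t ∈ quasispectrum ℝ (star z * z), 0 ≤ t := by
  intro t ht
  rw [Unitization.quasispectrum_eq_spectrum_inr' ℝ ℂ] at ht
  rw [Unitization.inr_mul, Unitization.inr_star] at ht
  exact spectrum_star_mul_self_nonneg t ht

lemma exists_approx_unit_elem (z : A) {ε : ℝ} (hε : 0 < ε) :
    ∃ u : A, u ∈ closure (NonUnitalStarAlgebra.adjoin ℝ {star z * z} : Set A) ∧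
      ‖z - z * u‖ ≤ ε ∧ ∀ w : A, ‖w - w * u‖ ≤ ‖w‖ := by
  set a : A := star z * z with ha_def
  have ha : IsSelfAdjoint a := IsSelfAdjoint.star_mul_self z
  have hq := quasispectrum_star_mul_self_nonneg' z
  set δ : ℝ := ε ^ 2 with hδ_def
  have hδ : 0 < δ := by positivity
  set f : ℝ → ℝ := fun t => t / (t + δ) with hf_def
  have hne : ∀ t ∈ quasispectrum ℝ a, t + δ ≠ 0 := by
    intro t ht
    have := hq t ht
    positivity
  have hf : ContinuousOn f (quasispectrum ℝ a) := by
    apply ContinuousOn.div continuousOn_id (by fun_prop)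
    exact hne
  have hf0 : f 0 = 0 := by simp [hf_def]
  set u : A := cfcₙ f a with hu_def
  have hu_mem : u ∈ closure (NonUnitalStarAlgebra.adjoin ℝ {a} : Set A) :=
    cfcn_mem_closure_adjoin ha f hf hf0
  have husa : IsSelfAdjoint u := cfcₙ_predicate f a
  have huq : ∀ s ∈ quasispectrum ℝ u, 0 ≤ s ∧ s < 1 := by
    have hmap := cfcₙ_map_quasispectrum f a hf hf0 ha
    rw [hu_def, hmap]
    rintro - ⟨t, ht, rfl⟩
    have ht0 := hq t ht
    refine ⟨by positivity, ?_⟩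
    rw [hf_def, div_lt_one (by positivity)]
    linarith
  -- express the relevant element via cfcₙ
  set q1 : ℝ → ℝ := fun t => t * f t with hq1_def
  set q2 : ℝ → ℝ := fun t => f t * t with hq2_def
  set q3 : ℝ → ℝ := fun t => f t * q1 t with hq3_def
  set g : ℝ → ℝ := fun t => t - q1 t - q2 t + q3 t with hg_def
  have hidc : ContinuousOn (fun t : ℝ => t) (quasispectrum ℝ a) := continuousOn_id
  have hq1c : ContinuousOn q1 (quasispectrum ℝ a) := hidc.mul hf
  have hq2c : ContinuousOn q2 (quasispectrum ℝ a) := hf.mul hidc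
  have hq3c : ContinuousOn q3 (quasispectrum ℝ a) := hf.mul hq1c
  have hq10 : q1 0 = 0 := by simp [hq1_def]
  have hq20 : q2 0 = 0 := by simp [hq2_def]
  have hq30 : q3 0 = 0 := by simp [hq3_def, hq10]
  have hq1a : cfcₙ q1 a = a * u := by
    rw [hq1_def, cfcₙ_mul _ _ a hidc rfl hf hf0, cfcₙ_id' ℝ a ha, hu_def]
  have hq2a : cfcₙ q2 a = u * a := by
    rw [hq2_def, cfcₙ_mul _ _ a hf hf0 hidc rfl, cfcₙ_id' ℝ a ha, hu_def]
  have hq3a : cfcₙ q3 a = u * (a * u) := by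
    rw [hq3_def, cfcₙ_mul _ _ a hf hf0 hq1c hq10, hq1a, hu_def]
  have hga : cfcₙ g a = a - a * u - u * a + u * (a * u) := by
    rw [hg_def, cfcₙ_add (fun t => t - q1 t - q2 t) q3 a ((hidc.sub hq1c).sub hq2c) (by simp [hq10, hq20]) hq3c hq30,
      cfcₙ_sub (fun t => t - q1 t) q2 a (hidc.sub hq1c) (by simp [hq10]) hq2c hq20,
      cfcₙ_sub (fun t => t) q1 a hidc rfl hq1c hq10, cfcₙ_id' ℝ a ha, hq1a, hq2a, hq3a]
  have hgbound : ∀ t ∈ quasispectrum ℝ a, ‖g t‖ ≤ δ := by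
    intro t ht
    have ht0 := hq t ht
    have htδ : 0 < t + δ := by positivity
    have hgt : g t = t * δ ^ 2 / (t + δ) ^ 2 := by
      rw [hg_def]
      simp only [hq3_def, hq2_def, hq1_def, hf_def]
      field_simp
      ring
    rw [hgt, Real.norm_eq_abs, abs_of_nonneg (by positivity), div_le_iff₀ (by positivity)]
    nlinarith [sq_nonneg t, mul_nonneg ht0 hδ.le]
  have hnorm_g : ‖cfcₙ g a‖ ≤ δ := norm_cfcₙ_le hgbound
  have hmain : ‖z - z * u‖ ≤ ε := by
    have expand : star (z - z * u) * (z - z * u) = a - a * u - u * a + u * (a * u) := by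
      rw [star_sub, star_mul, husa.star_eq, sub_mul, mul_sub, mul_sub, ha_def]
      noncomm_ring
    have hsq : ‖z - z * u‖ ^ 2 ≤ δ := by
      rw [sq, ← CStarRing.norm_star_mul_self, expand, ← hga]
      exact hnorm_g
    nlinarith [norm_nonneg (z - z * u), hε]
  refine ⟨u, hu_mem, hmain, ?_⟩
  -- the contraction estimate via the unitization
  have h1u : ‖(1 : Unitization ℂ A) - (u : Unitization ℂ A)‖ ≤ 1 := by
    have husa' : IsSelfAdjoint (u : Unitization ℂ A) := by
      rw [IsSelfAdjoint, ← Unitization.inr_star, husa.star_eq]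
    have hspec : spectrum ℝ (u : Unitization ℂ A) = quasispectrum ℝ u :=
      (Unitization.quasispectrum_eq_spectrum_inr' ℝ ℂ u).symm
    have : (1 : Unitization ℂ A) - (u : Unitization ℂ A)
        = cfc (fun t : ℝ => 1 - t) (u : Unitization ℂ A) := by
      rw [cfc_sub _ _ _ (by fun_prop) (by fun_prop), cfc_const_one ℝ _, cfc_id' ℝ _]
    rw [this]
    apply norm_cfc_le one_pos.le
    intro t ht
    rw [hspec] at ht
    obtain ⟨ht0, ht1⟩ := huq t ht
    rw [Real.norm_eq_abs, abs_le]
    constructor <;> linarith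
  intro w
  rw [← Unitization.norm_inr (𝕜 := ℂ), Unitization.inr_sub, Unitization.inr_mul]
  calc ‖(w : Unitization ℂ A) - (w : Unitization ℂ A) * (u : Unitization ℂ A)‖
      = ‖(w : Unitization ℂ A) * (1 - (u : Unitization ℂ A))‖ := by rw [mul_sub, mul_one]
    _ ≤ ‖(w : Unitization ℂ A)‖ * ‖(1 : Unitization ℂ A) - (u : Unitization ℂ A)‖ := norm_mul_le _ _
    _ ≤ ‖(w : Unitization ℂ A)‖ * 1 := by gcongr
    _ = ‖w‖ := by rw [mul_one, Unitization.norm_inr]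


section Ideals

variable (I J : TwoSidedIdeal A)

lemma TwoSidedIdeal.csmul_mem (hI : IsClosed (I : Set A)) (c : ℂ) {x : A} (hx : x ∈ I) :
    c • x ∈ I := by
  have : c • x ∈ closure (I : Set A) := by
    rw [Metric.mem_closure_iff]
    intro ε hε
    by_cases hc : c = 0
    · exact ⟨0, I.zero_mem, by simpa [hc] using hε⟩
    have hcpos : 0 < ‖c‖ := norm_pos_iff.mpr hc
    obtain ⟨u, -, hu, -⟩ := exists_approx_unit_elem x (ε := ε / (2 * ‖c‖)) (by positivity)
    refine ⟨x * (c • u), I.mul_mem_right _ _ hx, ?_⟩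
    rw [dist_eq_norm, mul_smul_comm, ← smul_sub, norm_smul]
    calc ‖c‖ * ‖x - x * u‖ ≤ ‖c‖ * (ε / (2 * ‖c‖)) := by gcongr
      _ = ε / 2 := by rw [mul_comm, div_mul_eq_div_div, div_mul_cancel₀ _ (ne_of_gt hcpos)]
      _ < ε := by linarith
  rwa [hI.closure_eq] at this

lemma TwoSidedIdeal.rsmul_mem (hI : IsClosed (I : Set A)) (r : ℝ) {x : A} (hx : x ∈ I) :
    r • x ∈ I := by
  have : r • x = (r : ℂ) • x := (algebraMap_smul ℂ r x).symm
  rw [this]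
  exact I.csmul_mem hI _ hx

lemma TwoSidedIdeal.adjoin_subset (hI : IsClosed (I : Set A)) {a : A} (haI : a ∈ I)
    (ha : IsSelfAdjoint a) :
    (NonUnitalStarAlgebra.adjoin ℝ {a} : Set A) ⊆ (I : Set A) := by
  intro x hx
  rw [SetLike.mem_coe] at hx
  refine (NonUnitalStarAlgebra.adjoin_induction ℝ
    (p := fun y _ => y ∈ I ∧ star y ∈ I) ?_ ?_ ?_ ?_ ?_ ?_ hx).1
  · rintro y (rfl : y = a)
    exact ⟨haI, by rw [ha.star_eq]; exact haI⟩
  · rintro x y - - ⟨hx1, hx2⟩ ⟨hy1, hy2⟩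
    exact ⟨I.add_mem hx1 hy1, by rw [star_add]; exact I.add_mem hx2 hy2⟩
  · simp [I.zero_mem]
  · rintro x y - - ⟨hx1, hx2⟩ ⟨hy1, hy2⟩
    exact ⟨I.mul_mem_right _ _ hx1, by rw [star_mul]; exact I.mul_mem_right _ _ hy2⟩
  · rintro r x - ⟨hx1, hx2⟩
    exact ⟨I.rsmul_mem hI r hx1, by rw [star_smul, star_trivial]; exact I.rsmul_mem hI r hx2⟩
  · rintro x - ⟨hx1, hx2⟩
    exact ⟨hx2, by rwa [star_star]⟩

lemma TwoSidedIdeal.exists_near (hI : IsClosed (I : Set A)) {j : A} (hj : j ∈ J)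
    {ε : ℝ} (hε : 0 < ε) :
    ∃ k, k ∈ I ∧ k ∈ J ∧ ‖j - k‖ < Metric.infDist j (I : Set A) + ε := by
  have hne : (I : Set A).Nonempty := ⟨0, I.zero_mem⟩
  obtain ⟨i, hiI, hdisti⟩ := (Metric.infDist_lt_iff hne).mp
    (show Metric.infDist j (I : Set A) < Metric.infDist j (I : Set A) + ε / 2 by linarith)
  obtain ⟨u, humem, hu1, hu2⟩ := exists_approx_unit_elem i (ε := ε / 2) (by linarith)
  have huI : u ∈ I := by
    have hsub := I.adjoin_subset hI (I.mul_mem_left (star i) i hiI)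
      (IsSelfAdjoint.star_mul_self i)
    have := closure_mono hsub humem
    rwa [hI.closure_eq] at this
  refine ⟨j * u, I.mul_mem_left _ _ huI, J.mul_mem_right _ _ hj, ?_⟩
  have hiden : j - j * u = ((j - i) - (j - i) * u) + (i - i * u) := by noncomm_ring
  calc ‖j - j * u‖ = ‖((j - i) - (j - i) * u) + (i - i * u)‖ := by rw [hiden]
    _ ≤ ‖(j - i) - (j - i) * u‖ + ‖i - i * u‖ := norm_add_le _ _
    _ ≤ ‖j - i‖ + ε / 2 := add_le_add (hu2 _) hu1
    _ < Metric.infDist j (I : Set A) + ε / 2 + ε / 2 := by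
        rw [dist_eq_norm] at hdisti; linarith
    _ = Metric.infDist j (I : Set A) + ε := by ring

end Ideals


/-- The sum of two closed two-sided ideals in a C⋆-algebra is closed. -/
lemma TwoSidedIdeal.isClosed_sum (I J : TwoSidedIdeal A) (hI : IsClosed (I : Set A))
    (hJ : IsClosed (J : Set A)) : IsClosed ((I : Set A) + (J : Set A)) := by
  set aI : AddSubgroup A :=
    { carrier := I, add_mem' := fun h1 h2 => I.add_mem h1 h2,
      zero_mem' := I.zero_mem, neg_mem' := fun h => I.neg_mem h } with haI
  set aJ : AddSubgroup A :=
    { carrier := J, add_mem' := fun h1 h2 => J.add_mem h1 h2,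
      zero_mem' := J.zero_mem, neg_mem' := fun h => J.neg_mem h } with haJ
  have haIc : IsClosed (aI : Set A) := hI
  have haJc : IsClosed (aJ : Set A) := hJ
  haveI : CompleteSpace aI := haIc.completeSpace_coe
  haveI : CompleteSpace aJ := haJc.completeSpace_coe
  set φ : aI × aJ →+ A := AddMonoidHom.mk' (fun p => (p.1 : A) + (p.2 : A)) (by
    rintro ⟨x1, y1⟩ ⟨x2, y2⟩
    simp only [Prod.fst_add, Prod.snd_add, AddSubgroup.coe_add]
    abel) with hφ
  set f : NormedAddGroupHom (aI × aJ) A := φ.mkNormedAddGroupHom 2 (by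
    rintro ⟨x, y⟩
    have h1 : ‖(x : A)‖ ≤ ‖((x, y) : aI × aJ)‖ := le_max_left _ _
    have h2 : ‖(y : A)‖ ≤ ‖((x, y) : aI × aJ)‖ := le_max_right _ _
    calc ‖φ (x, y)‖ ≤ ‖(x : A)‖ + ‖(y : A)‖ := norm_add_le _ _
      _ ≤ 2 * ‖((x, y) : aI × aJ)‖ := by linarith) with hf
  set K : AddSubgroup A := aI ⊔ aJ with hK
  have hKset : (K : Set A) = (I : Set A) + (J : Set A) := by
    ext x
    rw [hK, SetLike.mem_coe, AddSubgroup.mem_sup, Set.mem_add]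
    rfl
  have hyp : f.SurjectiveOnWith K 3 := by
    intro h hh
    rw [← SetLike.mem_coe, hKset, Set.mem_add] at hh
    obtain ⟨i₀, hi₀, j₀, hj₀, rfl⟩ := hh
    by_cases h0 : i₀ + j₀ = 0
    · exact ⟨0, by simpa [hf, hφ] using h0.symm, by simp⟩
    have hn : 0 < ‖i₀ + j₀‖ := norm_pos_iff.mpr h0
    obtain ⟨k, hkI, hkJ, hk⟩ := TwoSidedIdeal.exists_near I J hI hj₀ hn
    have hinf : Metric.infDist j₀ (I : Set A) ≤ ‖i₀ + j₀‖ := by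
      have := Metric.infDist_le_dist_of_mem (x := j₀) (show -i₀ ∈ (I : Set A) from I.neg_mem hi₀)
      rw [dist_eq_norm, sub_neg_eq_add, add_comm] at this
      exact this
    refine ⟨(⟨i₀ + k, I.add_mem hi₀ hkI⟩, ⟨j₀ - k, J.sub_mem hj₀ hkJ⟩), ?_, ?_⟩
    · show (i₀ + k) + (j₀ - k) = i₀ + j₀
      abel
    · have hjnorm : ‖j₀ - k‖ ≤ 2 * ‖i₀ + j₀‖ := by linarith
      have hinorm : ‖i₀ + k‖ ≤ 3 * ‖i₀ + j₀‖ := by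
        have : i₀ + k = (i₀ + j₀) - (j₀ - k) := by abel
        rw [this]
        calc ‖(i₀ + j₀) - (j₀ - k)‖ ≤ ‖i₀ + j₀‖ + ‖j₀ - k‖ := norm_sub_le _ _
          _ ≤ 3 * ‖i₀ + j₀‖ := by linarith
      have : ‖((⟨i₀ + k, I.add_mem hi₀ hkI⟩, ⟨j₀ - k, J.sub_mem hj₀ hkJ⟩) : aI × aJ)‖
          = max ‖i₀ + k‖ ‖j₀ - k‖ := rfl
      rw [this]
      apply max_le hinorm (by linarith)
  have hctrl := controlled_closure_of_complete (by norm_num : (0:ℝ) < 3)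
    (by norm_num : (0:ℝ) < 1) hyp
  apply isClosed_of_closure_subset
  intro x hx
  have hxK : x ∈ K.topologicalClosure := by
    rw [← SetLike.mem_coe, AddSubgroup.topologicalClosure_coe]
    rw [← hKset] at hx
    exact hx
  obtain ⟨g, hg, -⟩ := hctrl x hxK
  rw [← hg]
  exact Set.add_mem_add (g.1.2) (g.2.2)


/-- sum of two two-sided ideals as a two-sided ideal -/
def TwoSidedIdeal.sum {R : Type*} [NonUnitalNonAssocRing R] (I J : TwoSidedIdeal R) :
    TwoSidedIdeal R :=
  TwoSidedIdeal.mk' ((I : Set R) + (J : Set R))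
    ⟨0, I.zero_mem, 0, J.zero_mem, by simp⟩
    (by rintro x y ⟨a, ha, b, hb, rfl⟩ ⟨c, hc, d, hd, rfl⟩
        exact ⟨a + c, I.add_mem ha hc, b + d, J.add_mem hb hd, by
            show (a + c) + (b + d) = (a + b) + (c + d); exact add_add_add_comm a c b d⟩)
    (by rintro x ⟨a, ha, b, hb, rfl⟩
        exact ⟨-a, I.neg_mem ha, -b, J.neg_mem hb, by
            show -a + -b = -(a + b); exact (neg_add a b).symm⟩)
    (by rintro x y ⟨a, ha, b, hb, rfl⟩
        exact ⟨x * a, I.mul_mem_left _ _ ha, x * b, J.mul_mem_left _ _ hb, by rw [mul_add]⟩)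
    (by rintro x y ⟨a, ha, b, hb, rfl⟩
        exact ⟨a * y, I.mul_mem_right _ _ ha, b * y, J.mul_mem_right _ _ hb, by rw [add_mul]⟩)

lemma TwoSidedIdeal.coe_sum {R : Type*} [NonUnitalNonAssocRing R] (I J : TwoSidedIdeal R) :
    ((I.sum J : TwoSidedIdeal R) : Set R) = (I : Set R) + (J : Set R) :=
  TwoSidedIdeal.coe_mk' _ _ _ _ _ _


end Auxiliary

/-- If `C₁ ⊆ C₂ ⊆ B` are sub-C*-algebras such that `C₁` is regular in `C₂`
and regular in `B`, then `C₂` is regular in `B`. -/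
theorem stmt11 {B : Type*} [NonUnitalCStarAlgebra B]
    (C₁ C₂ : NonUnitalStarSubalgebra ℂ B)
    (hC₁ : IsClosed (C₁ : Set B)) (hC₂ : IsClosed (C₂ : Set B))
    (h12 : (C₁ : Set B) ⊆ (C₂ : Set B))
    (hreg12 : IsRegularIn {x : C₂ | (x : B) ∈ C₁})
    (hreg1B : IsRegularIn (C₁ : Set B)) :
    IsRegularIn (C₂ : Set B) := by
  have hints : ∀ (s : Set B), s ⊆ C₂ → ∀ T : Set B, T ∩ (C₂ : Set B) ∩ s = T ∩ s := by
    intro s hs T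
    rw [Set.inter_assoc, Set.inter_eq_self_of_subset_right hs]
  constructor
  · -- part (1)
    intro I J hI hJ h
    apply hreg1B.1 I J hI hJ
    calc (I : Set B) ∩ C₁ = (I : Set B) ∩ C₂ ∩ C₁ := (hints _ h12 _).symm
      _ = (J : Set B) ∩ C₂ ∩ C₁ := by rw [h]
      _ = (J : Set B) ∩ C₁ := hints _ h12 _
  · -- part (2)
    intro I J hI hJ
    haveI := hC₂
    set ι : C₂ →⋆ₙₐ[ℂ] B := NonUnitalStarSubalgebraClass.subtype C₂ with hι
    have hιval : ∀ x : C₂, ι x = (x : B) := fun _ => rfl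
    -- pullbacks of the ideals to C₂
    set P : TwoSidedIdeal C₂ := I.comap ι with hP
    set Q : TwoSidedIdeal C₂ := J.comap ι with hQ
    have hPset : (P : Set C₂) = (Subtype.val) ⁻¹' (I : Set B) := by
      ext x
      simp [hP, TwoSidedIdeal.mem_comap, hιval]
    have hQset : (Q : Set C₂) = (Subtype.val) ⁻¹' (J : Set B) := by
      ext x
      simp [hQ, TwoSidedIdeal.mem_comap, hιval]
    have hPc : IsClosed (P : Set C₂) := hPset ▸ hI.preimage continuous_subtype_val
    have hQc : IsClosed (Q : Set C₂) := hQset ▸ hJ.preimage continuous_subtype_val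
    -- the sums as ideals
    set K : TwoSidedIdeal B := I.sum J with hK
    have hKc : IsClosed (K : Set B) := by
      rw [hK, TwoSidedIdeal.coe_sum]
      exact TwoSidedIdeal.isClosed_sum I J hI hJ
    set S : TwoSidedIdeal C₂ := P.sum Q with hS
    have hSc : IsClosed (S : Set C₂) := by
      rw [hS, TwoSidedIdeal.coe_sum]
      exact TwoSidedIdeal.isClosed_sum P Q hPc hQc
    set T : TwoSidedIdeal C₂ := K.comap ι with hT
    have hTset : (T : Set C₂) = (Subtype.val) ⁻¹' (K : Set B) := by
      ext x
      simp [hT, TwoSidedIdeal.mem_comap, hιval]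
    have hTc : IsClosed (T : Set C₂) := hTset ▸ hKc.preimage continuous_subtype_val
    -- traces on C₁ agree
    have htrace : (S : Set C₂) ∩ {x : C₂ | (x : B) ∈ C₁} =
        (T : Set C₂) ∩ {x : C₂ | (x : B) ∈ C₁} := by
      ext x
      constructor
      · rintro ⟨hxS, hx1⟩
        refine ⟨?_, hx1⟩
        rw [hT, SetLike.mem_coe, TwoSidedIdeal.mem_comap, hιval, hK]
        rw [hS, SetLike.mem_coe] at hxS
        have hxS' := (TwoSidedIdeal.mem_mk' _ _ _ _ _ _ _).mp hxS
        obtain ⟨p, hp, q, hq, hpq⟩ := hxS'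
        have hpq' : p + q = x := hpq
        rw [← SetLike.mem_coe, TwoSidedIdeal.coe_sum]
        rw [hP, SetLike.mem_coe, TwoSidedIdeal.mem_comap, hιval] at hp
        rw [hQ, SetLike.mem_coe, TwoSidedIdeal.mem_comap, hιval] at hq
        exact ⟨(p : B), hp, (q : B), hq, by rw [← hpq']; rfl⟩
      · rintro ⟨hxT, hx1⟩
        refine ⟨?_, hx1⟩
        rw [hT, SetLike.mem_coe, TwoSidedIdeal.mem_comap, hιval, hK, ← SetLike.mem_coe,
          TwoSidedIdeal.coe_sum] at hxT
        have hmem : (x : B) ∈ ((I : Set B) + (J : Set B)) ∩ (C₁ : Set B) := ⟨hxT, hx1⟩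
        rw [hreg1B.2 I J hI hJ] at hmem
        obtain ⟨y, ⟨hyI, hyC1⟩, z, ⟨hzJ, hzC1⟩, hyz⟩ := hmem
        rw [hS, SetLike.mem_coe, ← SetLike.mem_coe, TwoSidedIdeal.coe_sum]
        refine ⟨⟨y, h12 hyC1⟩, ?_, ⟨z, h12 hzC1⟩, ?_, ?_⟩
        · rw [hP, SetLike.mem_coe, TwoSidedIdeal.mem_comap, hιval]; exact hyI
        · rw [hQ, SetLike.mem_coe, TwoSidedIdeal.mem_comap, hιval]; exact hzJ
        · show (fun x1 x2 => x1 + x2) _ _ = x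
          exact Subtype.ext hyz
    have hST : S = T := hreg12.1 S T hSc hTc htrace
    -- conclude
    ext x
    constructor
    · rintro ⟨hxK, hxC2⟩
      have hxT : (⟨x, hxC2⟩ : C₂) ∈ T := by
        rw [hT, TwoSidedIdeal.mem_comap, hιval, hK, ← SetLike.mem_coe, TwoSidedIdeal.coe_sum]
        exact hxK
      rw [← hST, hS, ← SetLike.mem_coe, TwoSidedIdeal.coe_sum] at hxT
      obtain ⟨p, hp, q, hq, hpq⟩ := hxT
      have hpq' : p + q = (⟨x, hxC2⟩ : C₂) := hpq
      rw [hP, SetLike.mem_coe, TwoSidedIdeal.mem_comap, hιval] at hp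
      rw [hQ, SetLike.mem_coe, TwoSidedIdeal.mem_comap, hιval] at hq
      refine ⟨(p : B), ⟨hp, p.2⟩, (q : B), ⟨hq, q.2⟩, ?_⟩
      show (p : B) + (q : B) = x
      rw [show ((p : B) + (q : B)) = ((p + q : C₂) : B) from rfl, hpq']
    · rintro ⟨y, ⟨hyI, hyC⟩, z, ⟨hzJ, hzC⟩, rfl⟩
      exact ⟨Set.add_mem_add hyI hzJ, C₂.add_mem hyC hzC⟩
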